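/- Let K be a field of characteristic p > 0 and K^sep a separable closure. Then the separable closure of K^{p^∞} inside K^sep equals (K^sep)^{p^∞}, where for a field L, L^{p^∞} = ⋂_{n≥0} L^{p^n} is the maximal perfect subfield. -/

import Mathlib

/-- The maximal perfect subfield `L^{p^∞} = ⋂_n L^{p^n}` of a field `L`
(in characteristic `p`, `Subfield.closure (Set.range (· ^ p ^ n))` is exactly the subfield of
`p^n`-th powers). -/
def perfectCore (L : Type*) [Field L] (p : ℕ) : Subfield L :=
  ⨅ n : ℕ, Subfield.closure (Set.range (· ^ p ^ n))

universe u

lemma mem_perfectCore_iff {L : Type*} [Field L] {p : ℕ} (hp : p.Prime) [CharP L p] {x : L} :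
    x ∈ perfectCore L p ↔ ∀ n : ℕ, ∃ y : L, y ^ p ^ n = x := by
  haveI : Fact p.Prime := ⟨hp⟩
  haveI : ExpChar L p := ExpChar.prime hp
  have h : ∀ n : ℕ, Subfield.closure (Set.range ((· ^ p ^ n) : L → L)) =
      (iterateFrobenius L p n).fieldRange := by
    intro n
    have : Set.range ((· ^ p ^ n) : L → L) = ↑(iterateFrobenius L p n).fieldRange := by
      ext z
      simp [RingHom.mem_fieldRange, iterateFrobenius_def, eq_comm]
    rw [this, Subfield.closure_eq]
  simp only [perfectCore, Subfield.mem_iInf, h, RingHom.mem_fieldRange,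
    iterateFrobenius_def]

/-- Let `K` be a field of characteristic `p > 0` and `K^sep` a separable
closure.  An element `x ∈ K^sep` is algebraic separable over `K^{p^∞}` (i.e. a root of a
nonzero separable polynomial with coefficients in `K^{p^∞}`) if and only if
`x ∈ (K^sep)^{p^∞}`; that is, the separable closure of `K^{p^∞}` inside `K^sep` equals
`(K^sep)^{p^∞}`. -/
theorem sepClosure_perfectCore {K Ksep : Type u} [Field K] [Field Ksep] [Algebra K Ksep]
    [IsSepClosure K Ksep] (p : ℕ) (hp : p.Prime) [CharP K p] :
    ∀ x : Ksep,
      (∃ q : Polynomial K, q ≠ 0 ∧ q.Separable ∧ (∀ i, q.coeff i ∈ perfectCore K p) ∧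
        Polynomial.aeval x q = 0) ↔ x ∈ perfectCore Ksep p := by
  intro x
  haveI : Fact p.Prime := ⟨hp⟩
  haveI : ExpChar K p := ExpChar.prime hp
  haveI : CharP Ksep p := charP_of_injective_algebraMap (algebraMap K Ksep).injective p
  haveI : ExpChar Ksep p := ExpChar.prime hp
  haveI : IsSepClosed Ksep := IsSepClosure.sep_closed K
  haveI : Algebra.IsSeparable K Ksep := IsSepClosure.separable
  have hcomm : ∀ n : ℕ, (algebraMap K Ksep).comp (iterateFrobenius K p n)
      = (iterateFrobenius Ksep p n).comp (algebraMap K Ksep) := fun n => by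
    ext a; simp [iterateFrobenius_def, map_pow]
  rw [mem_perfectCore_iff hp]
  constructor
  · rintro ⟨q, hq0, hqsep, hqc, hqx⟩ n
    have hc : ∀ i, ∃ a : K, a ^ p ^ n = q.coeff i := fun i =>
      ((mem_perfectCore_iff hp).mp (hqc i)) n
    choose c hcspec using hc
    set φ := iterateFrobenius K p n with hφ
    set ψ := iterateFrobenius Ksep p n with hψ
    set r : Polynomial K :=
      ∑ i ∈ Finset.range (q.natDegree + 1), Polynomial.C (c i) * Polynomial.X ^ i with hr
    have hrq : r.map φ = q := by
      rw [hr, Polynomial.map_sum]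
      simp only [Polynomial.map_mul, Polynomial.map_C, Polynomial.map_pow, Polynomial.map_X]
      have : ∀ i, φ (c i) = q.coeff i := fun i => by
        rw [hφ, iterateFrobenius_def, hcspec]
      simp only [this, Polynomial.C_mul_X_pow_eq_monomial]
      exact (Polynomial.as_sum_range' q _ (lt_add_one _)).symm
    have hrsep : r.Separable := (Polynomial.separable_map φ).mp (hrq ▸ hqsep)
    have hr0 : r ≠ 0 := fun h => hq0 (by rw [← hrq, h, Polynomial.map_zero])
    have hsplit : (r.map (algebraMap K Ksep)).Splits :=
      IsSepClosed.splits_codomain r hrsep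
    have hmapmap : q.map (algebraMap K Ksep) = (r.map (algebraMap K Ksep)).map ψ := by
      rw [← hrq, Polynomial.map_map, Polynomial.map_map, hcomm n]
    have hψinj : Function.Injective ψ := ψ.injective
    have hne : (r.map (algebraMap K Ksep)).map ψ ≠ 0 := by
      rw [Polynomial.map_ne_zero_iff hψinj]
      exact Polynomial.map_ne_zero hr0
    have hxroot : x ∈ ((r.map (algebraMap K Ksep)).map ψ).roots := by
      rw [Polynomial.mem_roots hne, Polynomial.IsRoot, ← hmapmap, Polynomial.eval_map,
        ← Polynomial.aeval_def]
      exact hqx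
    rw [hsplit.roots_map ψ] at hxroot
    obtain ⟨z, _, hzx⟩ := Multiset.mem_map.mp hxroot
    exact ⟨z, by rwa [hψ, iterateFrobenius_def] at hzx⟩
  · intro hx
    have hxint : IsIntegral K x := Algebra.IsSeparable.isIntegral K x
    refine ⟨minpoly K x, minpoly.ne_zero hxint, Algebra.IsSeparable.isSeparable K x, ?_,
      minpoly.aeval K x⟩
    intro i
    rw [mem_perfectCore_iff hp]
    intro n
    obtain ⟨y, hy⟩ := hx n
    have hyint : IsIntegral K y := Algebra.IsSeparable.isIntegral K y
    set φ := iterateFrobenius K p n with hφ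
    set m := minpoly K y with hm
    have key : (m.map φ) = minpoly K x := by
      have hmonic : (m.map φ).Monic := (minpoly.monic hyint).map φ
      have haev : Polynomial.aeval x (m.map φ) = 0 := by
        have h2 : (iterateFrobenius Ksep p n) (Polynomial.aeval y m)
            = Polynomial.eval₂ ((iterateFrobenius Ksep p n).comp (algebraMap K Ksep))
              (y ^ p ^ n) m := by
          rw [Polynomial.aeval_def, Polynomial.hom_eval₂, iterateFrobenius_def]
        rw [minpoly.aeval, map_zero] at h2
        rw [Polynomial.aeval_def, Polynomial.eval₂_map, hcomm n, ← hy, ← h2]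
      have hdvd : minpoly K x ∣ m.map φ := minpoly.dvd K x haev
      have hadj : IntermediateField.adjoin K ({y} : Set Ksep)
          = IntermediateField.adjoin K ({x} : Set Ksep) := by
        have h3 := IntermediateField.adjoin_eq_adjoin_pow_expChar_pow_of_isSeparable' K Ksep
          ({y} : Set Ksep) p n
        rwa [Set.image_singleton, hy] at h3
      have hdeg : (m.map φ).natDegree ≤ (minpoly K x).natDegree := by
        rw [Polynomial.natDegree_map]
        rw [← IntermediateField.adjoin.finrank hxint, ← IntermediateField.adjoin.finrank hyint,
          hadj]
      exact Polynomial.eq_of_monic_of_dvd_of_natDegree_le (minpoly.monic hxint) hmonic hdvd hdeg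
    exact ⟨m.coeff i, by rw [← key, Polynomial.coeff_map, hφ, iterateFrobenius_def]⟩
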